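/- Let A₁ and A₂ be unital associative ℂ-algebras, W₁ a simple A₁-module and W₂ a simple A₂-module, and assume that every A₁-module endomorphism of W₁ and every A₂-module endomorphism of W₂ is a scalar multiple of the identity. Then W₁ ⊗_ℂ W₂ is a simple module over A₁ ⊗_ℂ A₂. (This is the 'if' direction of Theorem 3.6 under the Schur-type hypothesis on endomorphism rings; the proof applies the Jacobson density theorem to each factor: given linearly independent vectors in each factor, operators can be found sending one to an arbitrary target and annihilating the others.) -/

import Mathlib

open TensorProduct

section Density

variable {A W : Type*} [Ring A] [Algebra ℂ A]
  [AddCommGroup W] [Module ℂ W] [Module A W] [IsScalarTower ℂ A W]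

/-- Special case of the Jacobson density theorem: in a simple `A`-module all of whose
`A`-endomorphisms are complex scalars, any `ℂ`-linearly independent finite family can be
sent to an arbitrary family by a single element of `A`. -/
lemma schur_density (hW : IsSimpleModule A W)
    (hend : ∀ φ : W →ₗ[A] W, ∃ c : ℂ, ∀ w : W, φ w = c • w) :
    ∀ (n : ℕ) (v : Fin n → W), LinearIndependent ℂ v → ∀ u : Fin n → W,
      ∃ a : A, ∀ i, a • v i = u i := by
  haveI := hW
  intro n
  induction n with
  | zero => exact fun v _ u => ⟨1, fun i => i.elim0⟩
  | succ n ih =>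
    intro v hv u
    have hvc : LinearIndependent ℂ (v ∘ Fin.castSucc) :=
      hv.comp _ (Fin.castSucc_injective n)
    set g : A →ₗ[A] (Fin n → W) :=
      LinearMap.pi (fun i => LinearMap.toSpanSingleton A W (v i.castSucc)) with hg
    set h : A →ₗ[A] W := LinearMap.toSpanSingleton A W (v (Fin.last n)) with hh
    by_cases hker : LinearMap.ker g ≤ LinearMap.ker h
    · exfalso
      -- Build an `A`-linear map `ψ : (Fin n → W) → W` with `ψ (g a) = a • v (last n)`.
      haveI : IsSemisimpleModule A (Fin n → W) := by
        apply isSemisimpleModule_of_isSemisimpleModule_submodule'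
          (p := fun i => LinearMap.range (LinearMap.single A (fun _ : Fin n => W) i))
        · intro i
          exact IsSemisimpleModule.congr
            (LinearEquiv.ofInjective (LinearMap.single A (fun _ : Fin n => W) i)
              (by rw [LinearMap.coe_single]; exact Pi.single_injective i)).symm
        · exact LinearMap.iSup_range_single A _
      obtain ⟨q, hq⟩ := exists_isCompl (LinearMap.range g)
      let φ₀ : (A ⧸ LinearMap.ker g) →ₗ[A] W := Submodule.liftQ _ h hker
      let e : (A ⧸ LinearMap.ker g) ≃ₗ[A] LinearMap.range g := g.quotKerEquivRange
      let ψ : (Fin n → W) →ₗ[A] W :=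
        φ₀ ∘ₗ e.symm.toLinearMap ∘ₗ Submodule.linearProjOfIsCompl _ q hq
      have hψ : ∀ a : A, ψ (g a) = a • v (Fin.last n) := by
        intro a
        have h1 : Submodule.linearProjOfIsCompl _ q hq (g a)
            = ⟨g a, LinearMap.mem_range_self g a⟩ :=
          Submodule.linearProjOfIsCompl_apply_left hq ⟨g a, LinearMap.mem_range_self g a⟩
        have h2 : e.symm ⟨g a, LinearMap.mem_range_self g a⟩ = Submodule.Quotient.mk a := by
          rw [LinearEquiv.symm_apply_eq]
          exact Subtype.ext (g.quotKerEquivRange_apply_mk a).symm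
        show φ₀ (e.symm (Submodule.linearProjOfIsCompl _ q hq (g a))) = a • v (Fin.last n)
        rw [h1, h2]
        simp [φ₀, hh, LinearMap.toSpanSingleton_apply]
      -- Schur: `ψ` composed with each coordinate inclusion is a scalar.
      have hc : ∀ i : Fin n, ∃ c : ℂ, ∀ w : W,
          ψ (Pi.single i w) = c • w := by
        intro i
        obtain ⟨c, hcw⟩ := hend (ψ ∘ₗ LinearMap.single A (fun _ : Fin n => W) i)
        exact ⟨c, fun w => hcw w⟩
      choose c hcw using hc
      have hg1 : g 1 = fun i => v i.castSucc := by
        funext i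
        simp [hg, LinearMap.pi_apply, LinearMap.toSpanSingleton_apply]
      have hsum : v (Fin.last n) = ∑ i : Fin n, c i • v i.castSucc := by
        have := hψ 1
        rw [one_smul, hg1] at this
        rw [← this]
        have hfun : (fun i : Fin n => v i.castSucc)
            = ∑ i : Fin n, Pi.single i (v i.castSucc) := by
          funext j
          rw [Finset.sum_apply]
          simp [Pi.single_apply]
        rw [hfun, map_sum]
        exact Finset.sum_congr rfl fun i _ => hcw i _
      -- contradiction with linear independence
      have hsnoc : Fin.snoc (v ∘ Fin.castSucc) (v (Fin.last n)) = v := by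
        funext i
        induction i using Fin.lastCases with
        | last => simp
        | cast i => simp
      rw [← hsnoc] at hv
      rw [linearIndependent_fin_snoc] at hv
      apply hv.2
      rw [hsum]
      exact Submodule.sum_mem _ fun i _ => Submodule.smul_mem _ _
        (Submodule.subset_span ⟨i, rfl⟩)
    · -- `(ker g) • v (last n)` is a nonzero submodule, hence all of `W`.
      obtain ⟨a₀, ha₀g, ha₀h⟩ := Set.not_subset.mp hker
      have hmap : (LinearMap.ker g).map h = ⊤ := by
        rcases eq_bot_or_eq_top ((LinearMap.ker g).map h) with hb | ht
        · exfalso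
          apply ha₀h
          have : h a₀ ∈ (LinearMap.ker g).map h := ⟨a₀, ha₀g, rfl⟩
          rw [hb] at this
          simpa [LinearMap.mem_ker] using this
        · exact ht
      obtain ⟨bb, hbb⟩ := ih (v ∘ Fin.castSucc) hvc (u ∘ Fin.castSucc)
      have : u (Fin.last n) - bb • v (Fin.last n) ∈ (LinearMap.ker g).map h := by
        rw [hmap]; trivial
      obtain ⟨cc, hccg, hcch⟩ := this
      refine ⟨bb + cc, fun i => ?_⟩
      induction i using Fin.lastCases with
      | last =>
        rw [add_smul]
        have : cc • v (Fin.last n) = u (Fin.last n) - bb • v (Fin.last n) := by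
          rw [← hcch]; simp [hh, LinearMap.toSpanSingleton_apply]
        rw [this]; abel
      | cast i =>
        rw [add_smul]
        have hz : cc • v i.castSucc = 0 := by
          have := congrFun (LinearMap.mem_ker.mp hccg) i
          simpa [hg, LinearMap.pi_apply, LinearMap.toSpanSingleton_apply] using this
        rw [hz, add_zero]
        exact hbb i

end Density

/-- 'If' direction of Theorem 3.6 under the Schur-type hypothesis: if `W₁` and `W₂`
are simple modules over unital associative ℂ-algebras `A₁`, `A₂` whose module
endomorphisms are all scalars, then `W₁ ⊗[ℂ] W₂` is a simple
`A₁ ⊗[ℂ] A₂`-module (for the componentwise action). -/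
theorem tensorProduct_isSimpleModule_of_schur {A₁ A₂ W₁ W₂ : Type*}
    [Ring A₁] [Algebra ℂ A₁] [Ring A₂] [Algebra ℂ A₂]
    [AddCommGroup W₁] [Module ℂ W₁] [Module A₁ W₁] [IsScalarTower ℂ A₁ W₁]
    [AddCommGroup W₂] [Module ℂ W₂] [Module A₂ W₂] [IsScalarTower ℂ A₂ W₂]
    (hW₁ : IsSimpleModule A₁ W₁) (hW₂ : IsSimpleModule A₂ W₂)
    (hend₁ : ∀ φ : W₁ →ₗ[A₁] W₁, ∃ c : ℂ, ∀ w : W₁, φ w = c • w)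
    (hend₂ : ∀ φ : W₂ →ₗ[A₂] W₂, ∃ c : ℂ, ∀ w : W₂, φ w = c • w)
    [Module (A₁ ⊗[ℂ] A₂) (W₁ ⊗[ℂ] W₂)]
    (hsmul : ∀ (a₁ : A₁) (a₂ : A₂) (w₁ : W₁) (w₂ : W₂),
      (a₁ ⊗ₜ[ℂ] a₂) • (w₁ ⊗ₜ[ℂ] w₂) = (a₁ • w₁) ⊗ₜ[ℂ] (a₂ • w₂)) :
    IsSimpleModule (A₁ ⊗[ℂ] A₂) (W₁ ⊗[ℂ] W₂) := by
  haveI := hW₁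
  haveI := hW₂
  haveI : Nontrivial W₁ := IsSimpleModule.nontrivial A₁ W₁
  haveI : Nontrivial W₂ := IsSimpleModule.nontrivial A₂ W₂
  classical
  let b := Module.Basis.ofVectorSpace ℂ W₂
  set ι := Module.Basis.ofVectorSpaceIndex ℂ W₂ with hι
  let e : W₁ ⊗[ℂ] W₂ ≃ₗ[ℂ] (ι →₀ W₁) :=
    (TensorProduct.congr (LinearEquiv.refl ℂ W₁) b.repr).trans
      (TensorProduct.finsuppScalarRight ℂ ℂ W₁ ι)
  have he : ∀ (w : W₁) (i : ι), e (w ⊗ₜ[ℂ] b i) = Finsupp.single i w := by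
    intro w i
    show TensorProduct.finsuppScalarRight ℂ ℂ W₁ ι
      (TensorProduct.congr (LinearEquiv.refl ℂ W₁) b.repr (w ⊗ₜ[ℂ] b i)) = _
    rw [TensorProduct.congr_tmul]
    simp only [LinearEquiv.refl_apply, Module.Basis.repr_self]
    rw [TensorProduct.finsuppScalarRight_apply_tmul]
    rw [Finsupp.sum_single_index (by simp)]
    simp
  have hrep : ∀ t : W₁ ⊗[ℂ] W₂, t = (e t).sum fun i w => w ⊗ₜ[ℂ] b i := by
    intro t
    apply e.injective
    rw [map_finsuppSum]
    simp_rw [he]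
    rw [Finsupp.sum_single]
  haveI : Nontrivial (W₁ ⊗[ℂ] W₂) := by
    obtain ⟨w₁, hw₁⟩ := exists_ne (0 : W₁)
    obtain ⟨i₀⟩ : Nonempty ι := b.index_nonempty
    refine ⟨e.symm (Finsupp.single i₀ w₁), 0, fun hcon => ?_⟩
    rw [LinearEquiv.symm_apply_eq, map_zero] at hcon
    exact hw₁ (by simpa using DFunLike.congr_fun hcon i₀)
  rw [isSimpleModule_iff]
  constructor
  intro N
  by_cases hN : N = ⊥
  · exact Or.inl hN
  right
  obtain ⟨t, htN, ht0⟩ := (Submodule.ne_bot_iff N).mp hN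
  set f := e t with hf
  have hf0 : f ≠ 0 := by
    intro hc
    apply ht0
    have := hrep t
    rw [← hf, hc] at this
    simpa using this
  obtain ⟨i₀, hi₀⟩ := Finsupp.support_nonempty_iff.mpr hf0
  -- use density to cut `t` down to a single nonzero pure tensor
  set s := f.support with hs
  obtain ⟨a, ha⟩ := schur_density hW₂ hend₂ s.card
    (fun k => b ((s.equivFin.symm k : ι)))
    (b.linearIndependent.comp _ (Subtype.val_injective.comp s.equivFin.symm.injective))
    (fun k => if ((s.equivFin.symm k : ι) : ι) = i₀ then b i₀ else 0)
  have ha' : ∀ i ∈ s, a • b i = if i = i₀ then b i₀ else 0 := by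
    intro i hi
    have := ha (s.equivFin ⟨i, hi⟩)
    simpa using this
  have hpure : ((1 : A₁) ⊗ₜ[ℂ] a) • t = f i₀ ⊗ₜ[ℂ] b i₀ := by
    conv_lhs => rw [hrep t, ← hf]
    rw [Finsupp.sum, Finset.smul_sum]
    calc (∑ i ∈ f.support, ((1 : A₁) ⊗ₜ[ℂ] a) • (f i ⊗ₜ[ℂ] b i))
        = ∑ i ∈ f.support, f i ⊗ₜ[ℂ] (if i = i₀ then b i₀ else 0) := by
          refine Finset.sum_congr rfl fun i hi => ?_
          rw [hsmul, one_smul, ha' i hi]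
      _ = f i₀ ⊗ₜ[ℂ] b i₀ := by
          rw [Finset.sum_eq_single i₀]
          · rw [if_pos rfl]
          · intro i _ hne; rw [if_neg hne, TensorProduct.tmul_zero]
          · intro hcon; exact absurd hi₀ hcon
  have hpN : (f i₀ ⊗ₜ[ℂ] b i₀) ∈ N := by
    rw [← hpure]; exact N.smul_mem _ htN
  have hfi₀ : f i₀ ≠ 0 := Finsupp.mem_support_iff.mp hi₀
  have hbi₀ : b i₀ ≠ 0 := b.ne_zero i₀
  -- generate everything from the pure tensor
  have hspan₁ : Submodule.span A₁ {f i₀} = ⊤ := by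
    rcases eq_bot_or_eq_top (Submodule.span A₁ {f i₀}) with hb' | ht'
    · exact absurd (Submodule.span_singleton_eq_bot.mp hb') hfi₀
    · exact ht'
  have hspan₂ : Submodule.span A₂ {b i₀} = ⊤ := by
    rcases eq_bot_or_eq_top (Submodule.span A₂ {b i₀}) with hb' | ht'
    · exact absurd (Submodule.span_singleton_eq_bot.mp hb') hbi₀
    · exact ht'
  rw [eq_top_iff]
  rintro z -
  induction z using TensorProduct.induction_on with
  | zero => exact N.zero_mem
  | tmul x y =>
    obtain ⟨a₁, ha₁⟩ := Submodule.mem_span_singleton.mp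
      (hspan₁ ▸ Submodule.mem_top : x ∈ Submodule.span A₁ {f i₀})
    obtain ⟨a₂, ha₂⟩ := Submodule.mem_span_singleton.mp
      (hspan₂ ▸ Submodule.mem_top : y ∈ Submodule.span A₂ {b i₀})
    have : (a₁ ⊗ₜ[ℂ] a₂) • (f i₀ ⊗ₜ[ℂ] b i₀) = x ⊗ₜ[ℂ] y := by
      rw [hsmul, ha₁, ha₂]
    rw [← this]
    exact N.smul_mem _ hpN
  | add x y hx hy => exact N.add_mem hx hy
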